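/- Let G be a connected graph, s,t nonadjacent vertices, T_s a minimal s,t-separator with T_s ⊆ N_G(s), D a connected component of G−T_s containing neither s nor t, and T_D := T_s ∩ N_G(D). Then for every nonempty A ⊆ D, the set of minimal s,t-separators S with A ⊆ C_s(G−S) equals the union over v ∈ T_D of the sets of minimal s,t-separators S with v ∈ C_s(G−S). Equivalently, for a minimal s,t-separator S, A ⊄ C_s(G−S) if and only if T_D ⊆ S. -/

import Mathlib

variable {V : Type*}

/-- Reachability in `G` by a walk avoiding the vertex set `S`. -/
def ReachAvoid (G : SimpleGraph V) (S : Set V) (u v : V) : Prop :=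
  ∃ w : G.Walk u v, ∀ x ∈ w.support, x ∉ S

/-- The connected component of `G − S` containing `s`, as a subset of `V`. -/
def compOf (G : SimpleGraph V) (S : Set V) (s : V) : Set V :=
  {v | ReachAvoid G S s v}

/-- `S` is an `s,t`-separator of `G`. -/
def IsSep (G : SimpleGraph V) (s t : V) (S : Set V) : Prop :=
  s ∉ S ∧ t ∉ S ∧ ¬ ReachAvoid G S s t

/-- `S` is a minimal `s,t`-separator of `G`. -/
def IsMinSep (G : SimpleGraph V) (s t : V) (S : Set V) : Prop :=
  IsSep G s t S ∧ ∀ S' ⊂ S, ¬ IsSep G s t S'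

/-- The open neighborhood of a vertex set `X`. -/
def nbhd (G : SimpleGraph V) (X : Set V) : Set V :=
  {v | v ∉ X ∧ ∃ x ∈ X, G.Adj x v}

/-- The closed neighborhood of a vertex `v`. -/
def clNbhd (G : SimpleGraph V) (v : V) : Set V :=
  insert v (G.neighborSet v)

/-- `S` is a minimal `s,t`-separator close to `sA`. -/
def CloseTo (G : SimpleGraph V) (s t : V) (A : Set V) (S : Set V) : Prop :=
  IsMinSep G s t S ∧ A ⊆ compOf G S s ∧
    ∀ T, IsMinSep G s t T → T ≠ S → A ⊆ compOf G T s →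
      ¬ compOf G T s ⊆ compOf G S s

/-- `G` contains no asteroidal triple. -/
def IsATFree (G : SimpleGraph V) : Prop :=
  ¬ ∃ a b c : V, a ≠ b ∧ a ≠ c ∧ b ≠ c ∧
    ¬ G.Adj a b ∧ ¬ G.Adj a c ∧ ¬ G.Adj b c ∧
    (∃ w : G.Walk a b, ∀ x ∈ w.support, x ∉ clNbhd G c) ∧
    (∃ w : G.Walk a c, ∀ x ∈ w.support, x ∉ clNbhd G b) ∧
    (∃ w : G.Walk b c, ∀ x ∈ w.support, x ∉ clNbhd G a)

/-- `S` is an `A,B`-separator. -/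
def IsABSep (G : SimpleGraph V) (A B : Set V) (S : Set V) : Prop :=
  S ⊆ (A ∪ B)ᶜ ∧ ∀ a ∈ A, ∀ b ∈ B, ¬ ReachAvoid G S a b

/-- `S` is a minimal `A,B`-separator. -/
def IsMinABSep (G : SimpleGraph V) (A B S : Set V) : Prop :=
  IsABSep G A B S ∧ ∀ S' ⊂ S, ¬ IsABSep G A B S'

/-- `S` is a safe (connectivity-preserving) `A,B`-separator: removing `S`
leaves two distinct components, one containing `A` and one containing `B`. -/
def IsSafeSep (G : SimpleGraph V) (A B S : Set V) : Prop :=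
  S ⊆ (A ∪ B)ᶜ ∧ ∃ a b : V, a ∉ S ∧ b ∉ S ∧
    A ⊆ compOf G S a ∧ B ⊆ compOf G S b ∧
    Disjoint (compOf G S a) (compOf G S b)

/-- The induced subgraph on `X` is connected (any two vertices of `X` are joined
by a walk staying in `X`). -/
def ConnIn (G : SimpleGraph V) (X : Set V) : Prop :=
  ∀ x ∈ X, ∀ y ∈ X, ∃ w : G.Walk x y, ∀ z ∈ w.support, z ∈ X

/-- The graph obtained from `G` by contracting `{s} ∪ A` to the vertex `s`
(the vertices of `A` become isolated). -/
def contractGraph (G : SimpleGraph V) (s : V) (A : Set V) : SimpleGraph V where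
  Adj u v := u ∉ A ∧ v ∉ A ∧ u ≠ v ∧
    (G.Adj u v ∨ (u = s ∧ ∃ a ∈ A, G.Adj a v) ∨ (v = s ∧ ∃ a ∈ A, G.Adj a u))
  symm := by
    constructor
    rintro u v ⟨hu, hv, hne, h⟩
    refine ⟨hv, hu, hne.symm, ?_⟩
    rcases h with h | h | h
    · exact Or.inl h.symm
    · exact Or.inr (Or.inr h)
    · exact Or.inr (Or.inl h)
  loopless := by
    constructor
    rintro u ⟨_, _, hne, _⟩
    exact hne rfl

/-- The graph obtained from `G` by adding all edges from `s` to `N_G[A]`. -/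
def addApex (G : SimpleGraph V) (s : V) (A : Set V) : SimpleGraph V where
  Adj u v := G.Adj u v ∨
    (u = s ∧ v ≠ s ∧ v ∈ A ∪ nbhd G A) ∨
    (v = s ∧ u ≠ s ∧ u ∈ A ∪ nbhd G A)
  symm := by
    constructor
    rintro u v (h | h | h)
    · exact Or.inl h.symm
    · exact Or.inr (Or.inr h)
    · exact Or.inr (Or.inl h)
  loopless := by
    constructor
    rintro u (h | ⟨h1, h2, _⟩ | ⟨h1, h2, _⟩)
    · exact G.loopless.irrefl u h
    · exact h2 h1
    · exact h2 h1

/-- The graph obtained from `G` by subdividing every edge. -/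
def subdiv (G : SimpleGraph V) : SimpleGraph (V ⊕ G.edgeSet) where
  Adj x y :=
    match x, y with
    | Sum.inl u, Sum.inr e => u ∈ (e : Sym2 V)
    | Sum.inr e, Sum.inl u => u ∈ (e : Sym2 V)
    | _, _ => False
  symm := by
    constructor
    rintro (u | e) (v | f) h <;> exact h
  loopless := by
    constructor
    rintro (u | e) h <;> exact h

/-- The instance `2Dis(G,A,B)` of 2-Disjoint-Connected-Subgraphs has a solution. -/
def TwoDisSolvable (G : SimpleGraph V) (A B : Set V) : Prop :=
  ∃ A₁ B₁ : Set V, Disjoint A₁ B₁ ∧ A ⊆ A₁ ∧ B ⊆ B₁ ∧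
    ConnIn G A₁ ∧ ConnIn G B₁

section Aux

open SimpleGraph

lemma ra_refl (G : SimpleGraph V) {S : Set V} {u : V} (hu : u ∉ S) :
    ReachAvoid G S u u :=
  ⟨Walk.nil, by intro x hx; simp only [Walk.support_nil, List.mem_singleton] at hx;
                subst hx; exact hu⟩

lemma ra_symm {G : SimpleGraph V} {S : Set V} {u v : V}
    (h : ReachAvoid G S u v) : ReachAvoid G S v u := by
  obtain ⟨w, hw⟩ := h
  exact ⟨w.reverse, by intro x hx; rw [Walk.support_reverse, List.mem_reverse] at hx;
                        exact hw x hx⟩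

lemma ra_trans {G : SimpleGraph V} {S : Set V} {u v x : V}
    (h1 : ReachAvoid G S u v) (h2 : ReachAvoid G S v x) : ReachAvoid G S u x := by
  obtain ⟨w1, hw1⟩ := h1
  obtain ⟨w2, hw2⟩ := h2
  refine ⟨w1.append w2, ?_⟩
  intro z hz
  rw [Walk.mem_support_append_iff] at hz
  exact hz.elim (hw1 z) (hw2 z)

lemma ra_end_not_mem {G : SimpleGraph V} {S : Set V} {u v : V}
    (h : ReachAvoid G S u v) : v ∉ S := by
  obtain ⟨w, hw⟩ := h
  exact hw v (Walk.end_mem_support w)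

lemma ra_start_not_mem {G : SimpleGraph V} {S : Set V} {u v : V}
    (h : ReachAvoid G S u v) : u ∉ S := by
  obtain ⟨w, hw⟩ := h
  exact hw u (Walk.start_mem_support w)

lemma ra_adj {G : SimpleGraph V} {S : Set V} {u v : V}
    (h : G.Adj u v) (hu : u ∉ S) (hv : v ∉ S) : ReachAvoid G S u v := by
  refine ⟨Walk.cons h Walk.nil, ?_⟩
  intro x hx
  simp only [Walk.support_cons, Walk.support_nil, List.mem_cons, List.mem_singleton,
    List.not_mem_nil, or_false] at hx
  rcases hx with rfl | rfl
  · exact hu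
  · exact hv

/-- Every vertex on a walk avoiding `S` starting at `u` is reachable from `u`
avoiding `S`. -/
lemma ra_of_mem_support {G : SimpleGraph V} {S : Set V} :
    ∀ {u v : V} (w : G.Walk u v), (∀ x ∈ w.support, x ∉ S) →
      ∀ z ∈ w.support, ReachAvoid G S u z := by
  intro u v w
  induction w with
  | nil =>
    intro hw z hz
    simp only [Walk.support_nil, List.mem_singleton] at hz
    subst hz
    exact ra_refl G (hw z (by simp))
  | cons h w ih =>
    intro hw z hz
    rw [Walk.support_cons, List.mem_cons] at hz
    rcases hz with rfl | hz
    · exact ra_refl G (hw z (Walk.start_mem_support _))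
    · have hu : _ ∉ S := hw _ (Walk.start_mem_support _)
      have hb : _ ∉ S := hw _ (by rw [Walk.support_cons]; exact List.mem_cons_of_mem _ (Walk.start_mem_support w))
      refine ra_trans (ra_adj h hu hb) ?_
      exact ih (fun x hx => hw x (by rw [Walk.support_cons]; exact List.mem_cons_of_mem _ hx)) z hz

/-- Crossing lemma: a walk from outside `D` into `D`, all of whose vertices
outside `D` avoid `S`, yields a vertex of `nbhd G D` reachable from the start
while avoiding `S`. -/
lemma crossing {G : SimpleGraph V} {S D : Set V} :
    ∀ {u y : V} (w : G.Walk u y), u ∉ D → y ∈ D →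
      (∀ z ∈ w.support, z ∈ D ∨ z ∉ S) →
      ∃ p, p ∈ nbhd G D ∧ ReachAvoid G S u p := by
  intro u y w
  induction w with
  | nil => intro hu hy _; exact absurd hy hu
  | cons h w ih =>
    intro hu hy hsup
    rename_i a b c
    have haS : a ∉ S := (hsup a (Walk.start_mem_support _)).resolve_left hu
    by_cases hb : b ∈ D
    · exact ⟨a, ⟨hu, b, hb, h.symm⟩, ra_refl G haS⟩
    · obtain ⟨p, hp, hr⟩ := ih hb hy
        (fun z hz => hsup z (by rw [Walk.support_cons]; exact List.mem_cons_of_mem _ hz))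
      have hbS : b ∉ S := ra_start_not_mem hr
      exact ⟨p, hp, ra_trans (ra_adj h haS hbS) hr⟩

end Aux

theorem stmt9 (G : SimpleGraph V) (hconn : G.Connected) (s t : V)
    (hst : s ≠ t) (hadj : ¬ G.Adj s t)
    (Ts : Set V) (hTs : IsMinSep G s t Ts) (hTsN : Ts ⊆ G.neighborSet s)
    (d : V) (hd : d ∉ Ts)
    (hsD : s ∉ compOf G Ts d) (htD : t ∉ compOf G Ts d)
    (A : Set V) (hAne : A.Nonempty) (hAD : A ⊆ compOf G Ts d) :
    ({S : Set V | IsMinSep G s t S ∧ A ⊆ compOf G S s} =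
      ⋃ v ∈ Ts ∩ nbhd G (compOf G Ts d),
        {S : Set V | IsMinSep G s t S ∧ v ∈ compOf G S s}) ∧
    ∀ S : Set V, IsMinSep G s t S →
      (¬ A ⊆ compOf G S s ↔ Ts ∩ nbhd G (compOf G Ts d) ⊆ S) := by
  classical
  set D := compOf G Ts d with hDdef
  -- the neighborhood of D is contained in Ts
  have hnb : nbhd G D ⊆ Ts := by
    rintro v ⟨hvD, x, hxD, hxv⟩
    by_contra hvTs
    obtain ⟨w, hw⟩ := hxD
    refine hvD ⟨w.concat hxv, ?_⟩
    intro z hz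
    rw [SimpleGraph.Walk.support_concat, List.mem_append,
      List.mem_singleton] at hz
    rcases hz with hz | rfl
    · exact hw z hz
    · exact hvTs
  -- vertices of D are mutually reachable avoiding any S disjoint from D
  have hwithin : ∀ (S : Set V), (∀ z ∈ D, z ∉ S) → ∀ x ∈ D, ∀ a ∈ D,
      ReachAvoid G S x a := by
    intro S hDS x hx a ha
    have key : ∀ b, b ∈ D → ReachAvoid G S d b := by
      intro b hb
      obtain ⟨w, hw⟩ := hb
      exact ⟨w, fun z hz => hDS z (ra_of_mem_support w hw z hz)⟩
    exact ra_trans (ra_symm (key x hx)) (key a ha)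
  -- every minimal s,t-separator is disjoint from D
  have hSD : ∀ S : Set V, IsMinSep G s t S → ∀ z ∈ D, z ∉ S := by
    intro S hS z hzD hzS
    have hsS : s ∉ S := hS.1.1
    have htS : t ∉ S := hS.1.2.1
    have hsub : S \ {z} ⊂ S := Set.sdiff_singleton_ssubset.mpr hzS
    have hnotsep := hS.2 _ hsub
    have hreach : ReachAvoid G (S \ {z}) s t := by
      by_contra hr
      exact hnotsep ⟨fun h => hsS h.1, fun h => htS h.1, hr⟩
    obtain ⟨w, hw⟩ := hreach
    have hzsup : z ∈ w.support := by
      by_contra hzw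
      refine hS.1.2.2 ⟨w, fun x hx hxS => hzw ?_⟩
      have hxz : x = z := by
        by_contra hne
        exact hw x hx ⟨hxS, hne⟩
      exact hxz ▸ hx
    obtain ⟨p, hpN, hpr⟩ :=
      crossing (S := S) (D := D) (w.dropUntil z hzsup).reverse htD hzD (by
        intro x hx
        rw [SimpleGraph.Walk.support_reverse, List.mem_reverse] at hx
        have hx' := SimpleGraph.Walk.support_dropUntil_subset w hzsup hx
        by_cases hxz : x = z
        · exact Or.inl (hxz ▸ hzD)
        · exact Or.inr (fun hxS => hw x hx' ⟨hxS, hxz⟩))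
    have hps : G.Adj s p := hTsN (hnb hpN)
    have hpS : p ∉ S := ra_end_not_mem hpr
    exact hS.1.2.2 (ra_trans (ra_adj hps hsS hpS) (ra_symm hpr))
  have hTD : Ts ∩ nbhd G D = nbhd G D := Set.inter_eq_right.mpr hnb
  -- the key equivalence
  have hkey : ∀ S : Set V, IsMinSep G s t S →
      (A ⊆ compOf G S s ↔ ∃ v ∈ nbhd G D, v ∈ compOf G S s) := by
    intro S hS
    constructor
    · intro hA
      obtain ⟨a, haA⟩ := hAne
      obtain ⟨w, hw⟩ := hA haA
      obtain ⟨p, hpN, hpr⟩ := crossing w hsD (hAD haA)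
        (fun z hz => Or.inr (hw z hz))
      exact ⟨p, hpN, hpr⟩
    · rintro ⟨v, hvN, hvr⟩ a haA
      obtain ⟨hvD, x, hxD, hxv⟩ := hvN
      have hxS : x ∉ S := hSD S hS x hxD
      have hvS : v ∉ S := ra_end_not_mem hvr
      have h1 : ReachAvoid G S s x := ra_trans hvr (ra_adj hxv.symm hvS hxS)
      exact ra_trans h1 (hwithin S (hSD S hS) x hxD a (hAD haA))
  constructor
  · ext S
    simp only [Set.mem_setOf_eq, Set.mem_iUnion, exists_prop, hTD]
    constructor
    · rintro ⟨hS, hA⟩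
      obtain ⟨v, hv, hvc⟩ := (hkey S hS).mp hA
      exact ⟨v, hv, hS, hvc⟩
    · rintro ⟨v, hv, hS, hvc⟩
      exact ⟨hS, (hkey S hS).mpr ⟨v, hv, hvc⟩⟩
  · intro S hS
    rw [hTD]
    constructor
    · intro hA v hv
      by_contra hvS
      have hvc : v ∈ compOf G S s := ra_adj (hTsN (hnb hv)) hS.1.1 hvS
      exact hA ((hkey S hS).mpr ⟨v, hv, hvc⟩)
    · intro hsub hA
      obtain ⟨v, hv, hvc⟩ := (hkey S hS).mp hA
      exact ra_end_not_mem hvc (hsub hv)
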